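/- Let d₁, d₂ > 1 be coprime integers. Let P(θ) be a finite linear combination of cos(k d₁ θ) and sin(k d₁ θ) over k ≥ 0 with coefficients vanishing whenever d₂ divides k (k ≥ 1), and let Q(θ) be a finite linear combination of cos(l d₂ θ) and sin(l d₂ θ) with coefficients vanishing whenever d₁ divides l (l ≥ 1). Then ∫_0^{2π} P(θ)^i Q'(θ) dθ = 0 for all i ≥ 0. -/

import Mathlib

open Real intervalIntegral

namespace TMVaux

lemma cosmulcos (x y : ℝ) : Real.cos x * Real.cos y
    = (Real.cos (x - y) + Real.cos (x + y)) / 2 := by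
  rw [Real.cos_sub, Real.cos_add]; ring

lemma sinmulsin (x y : ℝ) : Real.sin x * Real.sin y
    = (Real.cos (x - y) - Real.cos (x + y)) / 2 := by
  rw [Real.cos_sub, Real.cos_add]; ring

lemma sinmulcos (x y : ℝ) : Real.sin x * Real.cos y
    = (Real.sin (x + y) + Real.sin (x - y)) / 2 := by
  rw [Real.sin_add, Real.sin_sub]; ring

lemma integral_cos_int (n : ℤ) (hn : n ≠ 0) :
    ∫ θ in (0:ℝ)..(2 * π), Real.cos (n * θ) = 0 := by
  have hc : (n : ℝ) ≠ 0 := Int.cast_ne_zero.mpr hn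
  rw [intervalIntegral.integral_comp_mul_left (fun x => Real.cos x) hc, integral_cos]
  have h1 : (n : ℝ) * (2 * π) = (2 * n : ℤ) * π := by push_cast; ring
  rw [h1, Real.sin_int_mul_pi]
  simp

lemma integral_sin_int (n : ℤ) :
    ∫ θ in (0:ℝ)..(2 * π), Real.sin (n * θ) = 0 := by
  rcases eq_or_ne n 0 with rfl | hn
  · simp
  have hc : (n : ℝ) ≠ 0 := Int.cast_ne_zero.mpr hn
  rw [intervalIntegral.integral_comp_mul_left (fun x => Real.sin x) hc, integral_sin]
  have h1 : (n : ℝ) * (2 * π) = (n : ℤ) * (2 * π) := by push_cast; ring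
  rw [h1, Real.cos_int_mul_two_pi]
  simp

lemma cont_trig (n : ℤ) : Continuous fun θ : ℝ => Real.cos ((n:ℝ) * θ) := by continuity

lemma cont_trig' (n : ℤ) : Continuous fun θ : ℝ => Real.sin ((n:ℝ) * θ) := by continuity

lemma integral_cos_mul_cos (p q : ℤ) (h1 : p - q ≠ 0) (h2 : p + q ≠ 0) :
    ∫ θ in (0:ℝ)..(2 * π), Real.cos ((p:ℝ) * θ) * Real.cos ((q:ℝ) * θ) = 0 := by
  have e : ∀ θ : ℝ, Real.cos ((p:ℝ) * θ) * Real.cos ((q:ℝ) * θ)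
      = (Real.cos (((p - q : ℤ) : ℝ) * θ) + Real.cos (((p + q : ℤ) : ℝ) * θ)) / 2 := by
    intro θ; rw [cosmulcos]; push_cast; ring_nf
  simp only [e]
  rw [intervalIntegral.integral_div,
    intervalIntegral.integral_add ((cont_trig _).intervalIntegrable _ _)
      ((cont_trig _).intervalIntegrable _ _),
    integral_cos_int _ h1, integral_cos_int _ h2]
  norm_num

lemma integral_sin_mul_sin (p q : ℤ) (h1 : p - q ≠ 0) (h2 : p + q ≠ 0) :
    ∫ θ in (0:ℝ)..(2 * π), Real.sin ((p:ℝ) * θ) * Real.sin ((q:ℝ) * θ) = 0 := by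
  have e : ∀ θ : ℝ, Real.sin ((p:ℝ) * θ) * Real.sin ((q:ℝ) * θ)
      = (Real.cos (((p - q : ℤ) : ℝ) * θ) - Real.cos (((p + q : ℤ) : ℝ) * θ)) / 2 := by
    intro θ; rw [sinmulsin]; push_cast; ring_nf
  simp only [e]
  rw [intervalIntegral.integral_div,
    intervalIntegral.integral_sub ((cont_trig _).intervalIntegrable _ _)
      ((cont_trig _).intervalIntegrable _ _),
    integral_cos_int _ h1, integral_cos_int _ h2]
  norm_num

lemma integral_sin_mul_cos (p q : ℤ) :
    ∫ θ in (0:ℝ)..(2 * π), Real.sin ((p:ℝ) * θ) * Real.cos ((q:ℝ) * θ) = 0 := by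
  have e : ∀ θ : ℝ, Real.sin ((p:ℝ) * θ) * Real.cos ((q:ℝ) * θ)
      = (Real.sin (((p + q : ℤ) : ℝ) * θ) + Real.sin (((p - q : ℤ) : ℝ) * θ)) / 2 := by
    intro θ; rw [sinmulcos]; push_cast; ring_nf
  simp only [e]
  rw [intervalIntegral.integral_div,
    intervalIntegral.integral_add ((cont_trig' _).intervalIntegrable _ _)
      ((cont_trig' _).intervalIntegrable _ _),
    integral_sin_int, integral_sin_int]
  norm_num

noncomputable def cc (n : ℤ) : C(ℝ, ℝ) := ⟨fun θ => Real.cos ((n:ℝ) * θ), by continuity⟩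
noncomputable def ss (n : ℤ) : C(ℝ, ℝ) := ⟨fun θ => Real.sin ((n:ℝ) * θ), by continuity⟩

noncomputable def M (d : ℤ) : Submodule ℝ C(ℝ, ℝ) :=
  Submodule.span ℝ
    ((Set.range fun m : ℤ => cc (m * d)) ∪ (Set.range fun m : ℤ => ss (m * d)))

lemma cc_mem (d m : ℤ) : cc (m * d) ∈ M d :=
  Submodule.subset_span (Or.inl ⟨m, rfl⟩)

lemma ss_mem (d m : ℤ) : ss (m * d) ∈ M d :=
  Submodule.subset_span (Or.inr ⟨m, rfl⟩)

lemma cc_mul_cc (p q : ℤ) : cc p * cc q = (2:ℝ)⁻¹ • (cc (p - q) + cc (p + q)) := by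
  ext θ
  simp only [cc, ContinuousMap.mul_apply, ContinuousMap.coe_mk, ContinuousMap.smul_apply,
    ContinuousMap.add_apply, smul_eq_mul]
  rw [cosmulcos]; push_cast; ring_nf

lemma ss_mul_ss (p q : ℤ) : ss p * ss q = (2:ℝ)⁻¹ • (cc (p - q) - cc (p + q)) := by
  ext θ
  simp only [ss, cc, ContinuousMap.mul_apply, ContinuousMap.coe_mk, ContinuousMap.smul_apply,
    ContinuousMap.sub_apply, smul_eq_mul]
  rw [sinmulsin]; push_cast; ring_nf

lemma ss_mul_cc (p q : ℤ) : ss p * cc q = (2:ℝ)⁻¹ • (ss (p + q) + ss (p - q)) := by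
  ext θ
  simp only [ss, cc, ContinuousMap.mul_apply, ContinuousMap.coe_mk, ContinuousMap.smul_apply,
    ContinuousMap.add_apply, smul_eq_mul]
  rw [sinmulcos]; push_cast; ring_nf

lemma gen_mul_mem (d : ℤ) {x y : C(ℝ, ℝ)}
    (hx : x ∈ (Set.range fun m : ℤ => cc (m * d)) ∪ (Set.range fun m : ℤ => ss (m * d)))
    (hy : y ∈ (Set.range fun m : ℤ => cc (m * d)) ∪ (Set.range fun m : ℤ => ss (m * d))) :
    x * y ∈ M d := by
  have hsub : ∀ m m' : ℤ, m * d - m' * d = (m - m') * d := fun m m' => by ring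
  have hadd : ∀ m m' : ℤ, m * d + m' * d = (m + m') * d := fun m m' => by ring
  rcases hx with ⟨m, rfl⟩ | ⟨m, rfl⟩ <;> rcases hy with ⟨m', rfl⟩ | ⟨m', rfl⟩
  · rw [cc_mul_cc, hsub, hadd]
    exact Submodule.smul_mem _ _ (add_mem (cc_mem d _) (cc_mem d _))
  · rw [mul_comm, ss_mul_cc, hsub, hadd]
    exact Submodule.smul_mem _ _ (add_mem (ss_mem d _) (ss_mem d _))
  · rw [ss_mul_cc, hadd, hsub]
    exact Submodule.smul_mem _ _ (add_mem (ss_mem d _) (ss_mem d _))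
  · rw [ss_mul_ss, hsub, hadd]
    exact Submodule.smul_mem _ _ (sub_mem (cc_mem d _) (cc_mem d _))

lemma mul_mem_M (d : ℤ) {g₁ g₂ : C(ℝ, ℝ)} (h₁ : g₁ ∈ M d) (h₂ : g₂ ∈ M d) :
    g₁ * g₂ ∈ M d := by
  induction h₁ using Submodule.span_induction with
  | mem x hx =>
    induction h₂ using Submodule.span_induction with
    | mem y hy => exact gen_mul_mem d hx hy
    | zero => rw [mul_zero]; exact zero_mem _
    | add y z _ _ hy hz => rw [mul_add]; exact add_mem hy hz
    | smul r y _ hy => rw [mul_smul_comm]; exact Submodule.smul_mem _ _ hy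
  | zero => rw [zero_mul]; exact zero_mem _
  | add x y _ _ hx hy => rw [add_mul]; exact add_mem hx hy
  | smul r x _ hx => rw [smul_mul_assoc]; exact Submodule.smul_mem _ _ hx

lemma one_mem_M (d : ℤ) : (1 : C(ℝ, ℝ)) ∈ M d := by
  have : (1 : C(ℝ, ℝ)) = cc (0 * d) := by
    ext θ; simp [cc]
  rw [this]; exact cc_mem d 0

lemma pow_mem_M (d : ℤ) {g : C(ℝ, ℝ)} (hg : g ∈ M d) (i : ℕ) : g ^ i ∈ M d := by
  induction i with
  | zero => simpa using one_mem_M d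
  | succ n ih => rw [pow_succ]; exact mul_mem_M d ih hg

lemma key (d q : ℤ) (hq : ∀ m : ℤ, m * d ≠ q) {g : C(ℝ, ℝ)} (hg : g ∈ M d) :
    (∫ θ in (0:ℝ)..(2 * π), g θ * Real.cos ((q:ℝ) * θ)) = 0 ∧
    (∫ θ in (0:ℝ)..(2 * π), g θ * Real.sin ((q:ℝ) * θ)) = 0 := by
  induction hg using Submodule.span_induction with
  | mem x hx =>
    rcases hx with ⟨m, rfl⟩ | ⟨m, rfl⟩
    · have h1 : m * d - q ≠ 0 := sub_ne_zero.mpr (hq m)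
      have h2 : m * d + q ≠ 0 := by
        intro h
        exact hq (-m) (by linarith [hq (-m)])
      constructor
      · simpa [cc] using integral_cos_mul_cos (m * d) q h1 h2
      · have := integral_sin_mul_cos q (m * d)
        simp only [cc, ContinuousMap.coe_mk]
        rw [show (∫ θ in (0:ℝ)..(2 * π), Real.cos (((m * d : ℤ):ℝ) * θ) * Real.sin ((q:ℝ) * θ))
            = ∫ θ in (0:ℝ)..(2 * π), Real.sin ((q:ℝ) * θ) * Real.cos (((m * d : ℤ):ℝ) * θ)
          from by simp [mul_comm]]
        exact integral_sin_mul_cos q (m * d)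
    · have h1 : m * d - q ≠ 0 := sub_ne_zero.mpr (hq m)
      have h2 : m * d + q ≠ 0 := by
        intro h
        exact hq (-m) (by linarith [hq (-m)])
      constructor
      · simpa [ss] using integral_sin_mul_cos (m * d) q
      · simpa [ss] using integral_sin_mul_sin (m * d) q h1 h2
  | zero => simp
  | add x y hx hy ihx ihy =>
    have icx : IntervalIntegrable (fun θ => x θ * Real.cos ((q:ℝ) * θ)) MeasureTheory.volume 0 (2 * π) :=
      (x.continuous.mul (cont_trig q)).intervalIntegrable _ _
    have icy : IntervalIntegrable (fun θ => y θ * Real.cos ((q:ℝ) * θ)) MeasureTheory.volume 0 (2 * π) :=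
      (y.continuous.mul (cont_trig q)).intervalIntegrable _ _
    have isx : IntervalIntegrable (fun θ => x θ * Real.sin ((q:ℝ) * θ)) MeasureTheory.volume 0 (2 * π) :=
      (x.continuous.mul (cont_trig' q)).intervalIntegrable _ _
    have isy : IntervalIntegrable (fun θ => y θ * Real.sin ((q:ℝ) * θ)) MeasureTheory.volume 0 (2 * π) :=
      (y.continuous.mul (cont_trig' q)).intervalIntegrable _ _
    constructor
    · rw [show (fun θ => (x + y) θ * Real.cos ((q:ℝ) * θ))
          = fun θ => x θ * Real.cos ((q:ℝ) * θ) + y θ * Real.cos ((q:ℝ) * θ)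
        from by funext θ; simp [add_mul]]
      rw [intervalIntegral.integral_add icx icy, ihx.1, ihy.1, add_zero]
    · rw [show (fun θ => (x + y) θ * Real.sin ((q:ℝ) * θ))
          = fun θ => x θ * Real.sin ((q:ℝ) * θ) + y θ * Real.sin ((q:ℝ) * θ)
        from by funext θ; simp [add_mul]]
      rw [intervalIntegral.integral_add isx isy, ihx.2, ihy.2, add_zero]
  | smul r x hx ihx =>
    constructor
    · rw [show (fun θ => (r • x) θ * Real.cos ((q:ℝ) * θ))
          = fun θ => r * (x θ * Real.cos ((q:ℝ) * θ))
        from by funext θ; simp [mul_assoc]]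
      rw [intervalIntegral.integral_const_mul, ihx.1, mul_zero]
    · rw [show (fun θ => (r • x) θ * Real.sin ((q:ℝ) * θ))
          = fun θ => r * (x θ * Real.sin ((q:ℝ) * θ))
        from by funext θ; simp [mul_assoc]]
      rw [intervalIntegral.integral_const_mul, ihx.2, mul_zero]

end TMVaux

open TMVaux

set_option maxHeartbeats 1000000 in
theorem trig_moments_vanish_coprime_frequencies
    (d₁ d₂ : ℕ) (hd₁ : 1 < d₁) (hd₂ : 1 < d₂) (hcop : Nat.Coprime d₁ d₂)
    (r₁ r₂ : ℕ) (a b c f : ℕ → ℝ)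
    (hP : ∀ k, 1 ≤ k → d₂ ∣ k → a k = 0 ∧ b k = 0)
    (hQ : ∀ l, 1 ≤ l → d₁ ∣ l → c l = 0 ∧ f l = 0) :
    ∀ i : ℕ,
      ∫ θ in (0:ℝ)..(2 * π),
        (∑ k ∈ Finset.range (r₁ + 1),
            (a k * Real.cos (k * d₁ * θ) + b k * Real.sin (k * d₁ * θ))) ^ i *
        (∑ l ∈ Finset.range (r₂ + 1),
            (-(c l) * (l * d₂) * Real.sin (l * d₂ * θ)
              + f l * (l * d₂) * Real.cos (l * d₂ * θ))) = 0 := by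
  intro i
  set Pc : C(ℝ, ℝ) :=
    ⟨fun θ => ∑ k ∈ Finset.range (r₁ + 1),
        (a k * Real.cos (k * d₁ * θ) + b k * Real.sin (k * d₁ * θ)),
      by fun_prop⟩ with hPcdef
  have hPc : Pc ∈ M (d₁ : ℤ) := by
    have hrepr : Pc = ∑ k ∈ Finset.range (r₁ + 1),
        (a k • cc ((k : ℤ) * (d₁ : ℤ)) + b k • ss ((k : ℤ) * (d₁ : ℤ))) := by
      ext θ
      simp only [hPcdef, ContinuousMap.coe_mk, ContinuousMap.coe_sum, Finset.sum_apply,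
        ContinuousMap.add_apply, ContinuousMap.smul_apply, cc, ss, smul_eq_mul]
      refine Finset.sum_congr rfl fun k _ => ?_
      push_cast; ring_nf
    rw [hrepr]
    exact sum_mem fun k _ =>
      add_mem (Submodule.smul_mem _ _ (cc_mem _ _)) (Submodule.smul_mem _ _ (ss_mem _ _))
  have hpow : Pc ^ i ∈ M (d₁ : ℤ) := pow_mem_M _ hPc i
  have hGapp : ∀ θ : ℝ, (Pc ^ i) θ
      = (∑ k ∈ Finset.range (r₁ + 1),
          (a k * Real.cos (k * d₁ * θ) + b k * Real.sin (k * d₁ * θ))) ^ i := by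
    intro θ; simp [hPcdef]
  have hterm : ∀ l ∈ Finset.range (r₂ + 1),
      (∫ θ in (0:ℝ)..(2 * π), (Pc ^ i) θ *
        (-(c l) * (l * d₂) * Real.sin (l * d₂ * θ)
          + f l * (l * d₂) * Real.cos (l * d₂ * θ))) = 0 := by
    intro l _
    have hcast : ∀ θ : ℝ, ((l : ℝ) * (d₂ : ℝ)) * θ = (((l : ℤ) * (d₂ : ℤ) : ℤ) : ℝ) * θ := by
      intro θ; push_cast; ring
    by_cases hdvd : d₁ ∣ l
    · rcases Nat.eq_zero_or_pos l with rfl | hl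
      · simp
      · obtain ⟨hc0, hf0⟩ := hQ l hl hdvd
        simp [hc0, hf0]
    · have hq : ∀ m : ℤ, m * (d₁ : ℤ) ≠ (l : ℤ) * (d₂ : ℤ) := by
        intro m hm
        have hdd : (d₁ : ℤ) ∣ (l : ℤ) * (d₂ : ℤ) := ⟨m, by linarith [hm]⟩
        have hco : IsCoprime (d₁ : ℤ) (d₂ : ℤ) := Int.isCoprime_iff_gcd_eq_one.mpr hcop
        have : (d₁ : ℤ) ∣ (l : ℤ) := hco.dvd_of_dvd_mul_right hdd
        exact hdvd (Int.natCast_dvd_natCast.mp this)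
      obtain ⟨hcos0, hsin0⟩ := key (d₁ : ℤ) ((l : ℤ) * (d₂ : ℤ)) hq hpow
      have e : ∀ θ : ℝ, (Pc ^ i) θ *
          (-(c l) * (l * d₂) * Real.sin (l * d₂ * θ)
            + f l * (l * d₂) * Real.cos (l * d₂ * θ))
          = (-(c l) * (l * d₂)) * ((Pc ^ i) θ * Real.sin ((((l : ℤ) * (d₂ : ℤ) : ℤ) : ℝ) * θ))
            + (f l * (l * d₂)) * ((Pc ^ i) θ * Real.cos ((((l : ℤ) * (d₂ : ℤ) : ℤ) : ℝ) * θ)) := by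
        intro θ
        rw [← hcast θ]
        push_cast
        ring_nf
      simp only [e]
      rw [intervalIntegral.integral_add
          (f := fun θ => (-(c l) * (l * d₂)) * ((Pc ^ i) θ * Real.sin ((((l : ℤ) * (d₂ : ℤ) : ℤ) : ℝ) * θ)))
          (g := fun θ => (f l * (l * d₂)) * ((Pc ^ i) θ * Real.cos ((((l : ℤ) * (d₂ : ℤ) : ℤ) : ℝ) * θ)))
          ((continuous_const.mul ((Pc ^ i).continuous.mul (cont_trig' _))).intervalIntegrable _ _)
          ((continuous_const.mul ((Pc ^ i).continuous.mul (cont_trig _))).intervalIntegrable _ _),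
        intervalIntegral.integral_const_mul, intervalIntegral.integral_const_mul,
        hsin0, hcos0]
      ring
  have hswap : (∫ θ in (0:ℝ)..(2 * π),
      (∑ k ∈ Finset.range (r₁ + 1),
          (a k * Real.cos (k * d₁ * θ) + b k * Real.sin (k * d₁ * θ))) ^ i *
      (∑ l ∈ Finset.range (r₂ + 1),
          (-(c l) * (l * d₂) * Real.sin (l * d₂ * θ)
            + f l * (l * d₂) * Real.cos (l * d₂ * θ))))
      = ∑ l ∈ Finset.range (r₂ + 1),
          ∫ θ in (0:ℝ)..(2 * π), (Pc ^ i) θ *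
            (-(c l) * (l * d₂) * Real.sin (l * d₂ * θ)
              + f l * (l * d₂) * Real.cos (l * d₂ * θ)) := by
    rw [show (fun θ => (∑ k ∈ Finset.range (r₁ + 1),
          (a k * Real.cos (k * d₁ * θ) + b k * Real.sin (k * d₁ * θ))) ^ i *
        (∑ l ∈ Finset.range (r₂ + 1),
          (-(c l) * (l * d₂) * Real.sin (l * d₂ * θ)
            + f l * (l * d₂) * Real.cos (l * d₂ * θ))))
        = fun θ => ∑ l ∈ Finset.range (r₂ + 1), (Pc ^ i) θ *
            (-(c l) * (l * d₂) * Real.sin (l * d₂ * θ)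
              + f l * (l * d₂) * Real.cos (l * d₂ * θ))
      from by
        funext θ
        rw [← hGapp θ, Finset.mul_sum]]
    exact intervalIntegral.integral_finset_sum fun l _ =>
      ((Pc ^ i).continuous.mul (by fun_prop)).intervalIntegrable _ _
  rw [hswap]
  exact Finset.sum_eq_zero hterm
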